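/- Let u, w : [0,T] → H₀¹(Ω) with u the weak solution of u_t - ∇·α(∇u) = f and w(t) the elliptic reconstruction satisfying ⟨α(∇w), ∇v⟩ = ⟨g, v⟩ for all v ∈ H₀¹(Ω), where g = -AU + f - Πf and U solves the semidiscrete IPDG scheme ⟨U_t, V⟩ + B(U,V) = ⟨f,V⟩ for all V ∈ S^p. Then with e = U - u, for all v ∈ H₀¹(Ω): ⟨e_t, v⟩ + ⟨α(∇w) - α(∇u), ∇v⟩ = 0. -/

import Mathlib

open RealInnerProductSpace

/-- Lemma 3.3, differential error relation. `L2` plays the role of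
`L²(Ω)`, `Gr` that of `L²(Ω)ᵈ`, `H01 ⊆ L2` that of `H₀¹(Ω)` with weak gradient `grad`,
`Sp ⊆ L2` the discontinuous finite element space, `α t` the (Nemytskii) quasilinear
flux, `B t` the IPDG semilinear form `B(U(t), ·)`, `AU t = A(t)U(t)` the discrete
operator, and `Π` the `L²`-orthogonal projection onto `Sp`. -/
theorem differential_error_relation {L2 Gr : Type*} [NormedAddCommGroup L2]
    [InnerProductSpace ℝ L2] [NormedAddCommGroup Gr] [InnerProductSpace ℝ Gr]
    (H01 Sp : Submodule ℝ L2) [CompleteSpace Sp]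
    (grad : H01 →ₗ[ℝ] Gr) (T : ℝ)
    (u w : ℝ → H01) (U : ℝ → Sp)
    (ut Ut : ℝ → L2) (f g AU : ℝ → L2)
    (α : ℝ → Gr → Gr) (B : ℝ → L2 → ℝ)
    (hu : ∀ t ∈ Set.Icc 0 T, HasDerivAt (fun s => ((u s : L2))) (ut t) t)
    (hU : ∀ t ∈ Set.Icc 0 T, HasDerivAt (fun s => ((U s : L2))) (Ut t) t)
    (hUt : ∀ t, Ut t ∈ Sp) (hAU : ∀ t, AU t ∈ Sp)
    -- weak form of the quasilinear parabolic PDE (1)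
    (hpde : ∀ t ∈ Set.Icc 0 T, ∀ v : H01,
      ⟪ut t, (v : L2)⟫ + ⟪α t (grad (u t)), grad v⟫ = ⟪f t, (v : L2)⟫)
    -- definition of `g := -AU + f - Πf`
    (hg : ∀ t, g t = -(AU t) + f t - (Sp.orthogonalProjectionOnto (f t) : L2))
    -- definition (8) of the discrete operator: `⟨-AU, V⟩ = B(U, V)` for `V ∈ Sp`
    (hA : ∀ t, ∀ V ∈ Sp, ⟪-(AU t), V⟫ = B t V)
    -- the semidiscrete IPDG scheme (6)
    (hscheme : ∀ t ∈ Set.Icc 0 T, ∀ V ∈ Sp, ⟪Ut t, V⟫ + B t V = ⟪f t, V⟫)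
    -- the elliptic reconstruction (7)
    (hrec : ∀ t ∈ Set.Icc 0 T, ∀ v : H01,
      ⟪α t (grad (w t)), grad v⟫ = ⟪g t, (v : L2)⟫) :
    ∀ t ∈ Set.Icc 0 T, ∀ v : H01,
      ⟪Ut t - ut t, (v : L2)⟫ +
        ⟪α t (grad (w t)) - α t (grad (u t)), grad v⟫ = 0 := by

  intro t ht v
  -- key projection fact: for p ∈ Sp, ⟪p, v⟫ = ⟪p, Πv⟫
  have proj : ∀ p ∈ Sp, ∀ x : L2, (inner ℝ p x : ℝ)
      = ⟪p, ((Sp.orthogonalProjectionOnto x : Sp) : L2)⟫ := by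
    intro p hp x
    have h1 := Sp.inner_starProjection_left_eq_right p x
    rw [Submodule.starProjection_apply, Submodule.starProjection_apply] at h1
    have h2 : ((Sp.orthogonalProjectionOnto p : Sp) : L2) = p := by
      rw [← Submodule.starProjection_apply, Submodule.starProjection_eq_self_iff.2 hp]
    rw [h2] at h1
    exact h1
  set Pv : L2 := ((Sp.orthogonalProjectionOnto (v : L2) : Sp) : L2) with hPv
  have hPvmem : Pv ∈ Sp := (Sp.orthogonalProjectionOnto (v : L2)).2
  have hsch := hscheme t ht Pv hPvmem
  rw [← hA t Pv hPvmem] at hsch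
  have hUtv : (inner ℝ (Ut t) (v : L2) : ℝ) = ⟪Ut t, Pv⟫ := proj _ (hUt t) _
  have hAUv : (inner ℝ (-(AU t)) (v : L2) : ℝ) = ⟪-(AU t), Pv⟫ :=
    proj _ (neg_mem (hAU t)) _
  have hPf : (inner ℝ ((Sp.orthogonalProjectionOnto (f t) : Sp) : L2) (v : L2) : ℝ)
      = ⟪f t, Pv⟫ := by
      have h := Sp.inner_starProjection_left_eq_right (f t) (v : L2)
      rwa [Submodule.starProjection_apply, Submodule.starProjection_apply] at h
  have h1 := hpde t ht v
  have h2 := hrec t ht v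
  rw [inner_sub_left, inner_sub_left, h2, hg t, inner_sub_left, inner_add_left,
    hUtv, hAUv, hPf]
  linarith
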